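/- Let S and T be finite quantum stop times and suppose T is deterministic, i.e. T({t}) = I for some t ∈ (0,∞). Then S ⋆ T = S + t, where S + t is the finite quantum stop time with (S + t)([0,u]) = 0 if u ∈ [0,t) and (S + t)([0,u]) = S([0, u − t]) if u ∈ [t,∞]. -/

import Mathlib

/- ------------------------------------------------------------------
Common framework: an abstract axiomatisation of Boson Fock space
`𝓕 = Γ(L²([0,∞); k))` over `H = L²([0,∞); k)`, quantum stop times,
stop-time integrals (as limits of Riemann sums over the net of finite
partitions of `[0, t] ⊆ [0, ∞]` ordered by refinement), the CCR flow,
and operator cocycles, following Belton–Sinha,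
"Stopping the CCR flow and its isometric cocycles".
------------------------------------------------------------------ -/

open Filter MeasureTheory Topology
open scoped ENNReal

noncomputable section

local notation "⟪" x ", " y "⟫" => @inner ℂ _ _ x y

/-- A finite partition `{0 = π₀ < π₁ < ⋯ < π_{n+1} = t}` of `[0, t] ⊆ [0, ∞]`,
encoded as a finite set of points of `[0, ∞]` containing `0` and `t` and
contained in `[0, t]`. -/
structure StopPartition (t : ℝ≥0∞) where
  pts : Finset ℝ≥0∞
  zero_mem : 0 ∈ pts
  top_mem : t ∈ pts
  mem_le : ∀ s ∈ pts, s ≤ t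

namespace StopPartition

variable {t : ℝ≥0∞}

/-- Partitions are (pre)ordered by refinement: `π ≤ π'` iff `π'` refines `π`. -/
instance : Preorder (StopPartition t) where
  le π π' := π.pts ⊆ π'.pts
  le_refl _ := Finset.Subset.refl _
  le_trans _ _ _ h h' := Finset.Subset.trans h h'

/-- The predecessor of `s` in the partition `π`: the largest partition point
strictly less than `s` (and `0` if there is none). -/
def pred (π : StopPartition t) (s : ℝ≥0∞) : ℝ≥0∞ :=
  (π.pts.filter fun u => u < s).sup id

end StopPartition

variable {H 𝓕 : Type*}
  [NormedAddCommGroup H] [InnerProductSpace ℂ H] [CompleteSpace H]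
  [NormedAddCommGroup 𝓕] [InnerProductSpace ℂ 𝓕] [CompleteSpace 𝓕]

/-- An abstract presentation of Boson Fock space `𝓕 ≅ Γ(H)` over
`H = L²([0,∞); k)`, together with the structure maps needed here:
exponential vectors, truncation `f ↦ f·1_{[0,t)}`, the right shifts `θ_t`
and their adjoints, second quantisations `Γ_t` (with `Γ_∞` the projection
onto `ℂε(0)`, i.e. the second quantisation of `θ_∞ = 0`), and for each
`f ∈ H`, `s ∈ [0,∞]` the "past insertion" operator
`past f s = |ε(f1_{[0,s)})⟩⟨ε(0)| ⊗ I_{[s}` on `𝓕 ≅ 𝓕_{s)} ⊗ 𝓕_{[s}`, which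
maps a future-adapted vector `ε(0|_{[0,s)}) ⊗ x` to `ε(f|_{[0,s)}) ⊗ x`. -/
structure FockSpec (H 𝓕 : Type*) [NormedAddCommGroup H] [InnerProductSpace ℂ H]
    [CompleteSpace H] [NormedAddCommGroup 𝓕] [InnerProductSpace ℂ 𝓕] [CompleteSpace 𝓕] where
  /-- the exponential vectors -/
  eV : H → 𝓕
  inner_eV : ∀ f g : H, ⟪eV f, eV g⟫ = Complex.exp ⟪f, g⟫
  dense_eV : Dense (Submodule.span ℂ (Set.range eV) : Set 𝓕)
  /-- `cut t` is multiplication by the indicator of `[0, t)`, `f ↦ f|_{[0,t)}` -/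
  cut : ℝ≥0∞ → H →L[ℂ] H
  cut_zero : cut 0 = 0
  cut_top : cut ⊤ = ContinuousLinearMap.id ℂ H
  cut_sa : ∀ (t : ℝ≥0∞) (f g : H), ⟪cut t f, g⟫ = ⟪f, cut t g⟫
  cut_min : ∀ (s u : ℝ≥0∞) (f : H), cut s (cut u f) = cut (min s u) f
  /-- the isometric right shift `θ_t`, with `θ_∞ = 0` -/
  shift : ℝ≥0∞ → H →L[ℂ] H
  shift_top : shift ⊤ = 0
  shift_inner : ∀ t : ℝ≥0∞, t ≠ ⊤ → ∀ f g : H, ⟪shift t f, shift t g⟫ = ⟪f, g⟫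
  shift_add : ∀ (s u : ℝ≥0∞) (f : H), shift s (shift u f) = shift (s + u) f
  cut_shift : ∀ (t : ℝ≥0∞) (f : H), cut t (shift t f) = 0
  /-- `shiftL t = θ_t^*`, i.e. `f ↦ f(· + t)` -/
  shiftL : ℝ≥0∞ → H →L[ℂ] H
  shiftL_adj : ∀ (t : ℝ≥0∞) (f g : H), ⟪shift t f, g⟫ = ⟪f, shiftL t g⟫
  /-- the second quantisation `Γ_t : ε(f) ↦ ε(θ_t f)`;  `Γ_∞` is the orthogonal
  projection onto `ℂ ε(0)` -/
  Gam : ℝ≥0∞ → 𝓕 →L[ℂ] 𝓕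
  Gam_eV : ∀ (t : ℝ≥0∞) (f : H), Gam t (eV f) = eV (shift t f)
  /-- `GamL t = Γ_t^*` -/
  GamL : ℝ≥0∞ → 𝓕 →L[ℂ] 𝓕
  GamL_eV : ∀ t : ℝ≥0∞, t ≠ ⊤ → ∀ f : H, GamL t (eV f) = eV (shiftL t f)
  GamL_adj : ∀ (t : ℝ≥0∞) (x y : 𝓕), ⟪Gam t x, y⟫ = ⟪x, GamL t y⟫
  /-- past insertion: on `𝓕 ≅ 𝓕_{s)} ⊗ 𝓕_{[s}`,
  `past f s = |ε(f|_{[0,s)})⟩⟨ε(0|_{[0,s)})| ⊗ I_{[s}`; it maps `ε(0|_{[0,s)}) ⊗ x`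
  to `ε(f|_{[0,s)}) ⊗ x` -/
  past : H → ℝ≥0∞ → 𝓕 →L[ℂ] 𝓕
  past_eV : ∀ (f : H) (s : ℝ≥0∞) (g : H), past f s (eV g) = eV (cut s f + g - cut s g)
  /-- `projE t = E_t`, the second quantisation of `cut t`: the orthogonal projection
  onto `𝓕_{t)} ⊗ ε(0|_{[t,∞)})` -/
  projE : ℝ≥0∞ → 𝓕 →L[ℂ] 𝓕
  projE_eV : ∀ (t : ℝ≥0∞) (f : H), projE t (eV f) = eV (cut t f)

namespace FockSpec

variable (E : FockSpec H 𝓕)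

/-- `X ∈ B(𝓕_{t)}) ⊗ I_{[t}`, expressed through the factorisation of matrix
elements between exponential vectors. -/
def AdaptedAt (X : 𝓕 →L[ℂ] 𝓕) (t : ℝ≥0∞) : Prop :=
  ∀ f g : H, ⟪E.eV f, X (E.eV g)⟫ =
    ⟪E.eV (E.cut t f), X (E.eV (E.cut t g))⟫ * Complex.exp ⟪f - E.cut t f, g - E.cut t g⟫

/-- `F : [0, t] → 𝓕` is future adapted: `F(s) = ε(0|_{[0,s)}) ⊗ F_s ∈
ε(0|_{[0,s)}) ⊗ 𝓕_{[s}` for all `s ∈ (0, t]` (the value at `s = ∞`, when `t = ∞`,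
being fixed by the same requirement). -/
def FutureAdapted (t : ℝ≥0∞) (F : ℝ≥0∞ → 𝓕) : Prop :=
  ∀ s : ℝ≥0∞, 0 < s → s ≤ t → E.past 0 s (F s) = F s

end FockSpec

/-- `F` is bounded on `[0, t]`. -/
def BddOn {𝓕 : Type*} [NormedAddCommGroup 𝓕] (t : ℝ≥0∞) (F : ℝ≥0∞ → 𝓕) : Prop :=
  ∃ C : ℝ, ∀ s ≤ t, ‖F s‖ ≤ C

/-- A quantum stop time: a spectral measure on the Borel sets of `[0, ∞]`,
with values orthogonal projections on `𝓕`, which is identity adapted; we impose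
throughout (as in the paper) that `S({0}) = 0`. -/
structure QST (E : FockSpec H 𝓕) where
  meas : Set ℝ≥0∞ → 𝓕 →L[ℂ] 𝓕
  sa : ∀ A : Set ℝ≥0∞, IsSelfAdjoint (meas A)
  idem : ∀ A : Set ℝ≥0∞, meas A ∘L meas A = meas A
  /-- condition (ii): `A ↦ ⟨x, S(A) y⟩` is a complex measure -/
  cm : 𝓕 → 𝓕 → MeasureTheory.ComplexMeasure ℝ≥0∞
  cm_apply : ∀ (x y : 𝓕) (A : Set ℝ≥0∞), MeasurableSet A → cm x y A = ⟪x, meas A y⟫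
  total : meas Set.univ = 1
  adapted : ∀ t : ℝ≥0∞, t ≠ ⊤ → E.AdaptedAt (meas {s | s ≤ t}) t
  zero : meas {0} = 0

namespace QST

variable {E : FockSpec H 𝓕}

/-- A quantum stop time is finite when `S({∞}) = 0`. -/
def Finite (S : QST E) : Prop := S.meas {⊤} = 0

/-- The Riemann sum `Σ_{j=1}^{n+1} S((π_{j-1}, π_j]) v(π_j)` associated with a
partition `π` of `[0, t]` and an integrand `v`. -/
def sum (S : QST E) {t : ℝ≥0∞} (v : ℝ≥0∞ → 𝓕) (π : StopPartition t) : 𝓕 :=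
  ∑ s ∈ π.pts.erase 0, S.meas (Set.Ioc (π.pred s) s) (v s)

end QST

variable {E : FockSpec H 𝓕}

/-- The integral of a complex function against a complex measure, via the Jordan
decompositions of its real and imaginary parts. -/
def cintegral (μ : MeasureTheory.ComplexMeasure ℝ≥0∞) (φ : ℝ≥0∞ → ℂ) : ℂ :=
  ((∫ s, φ s ∂(MeasureTheory.ComplexMeasure.re μ).toJordanDecomposition.posPart) -
      ∫ s, φ s ∂(MeasureTheory.ComplexMeasure.re μ).toJordanDecomposition.negPart) +
    Complex.I * ((∫ s, φ s ∂(MeasureTheory.ComplexMeasure.im μ).toJordanDecomposition.posPart) -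
      ∫ s, φ s ∂(MeasureTheory.ComplexMeasure.im μ).toJordanDecomposition.negPart)

/-- `∫_{[0,t]} φ(s) S^{f,g}(ds)`, where `S^{f,g}` is the finite Borel measure on
`[0, ∞]` with `S^{f,g}(A) = ∫_A exp(-∫_s^∞ ⟨f(r), g(r)⟩ dr) ⟨ε(f), S(ds) ε(g)⟩`;
here `∫_s^∞ ⟨f(r), g(r)⟩ dr = ⟪f - f|_{[0,s)}, g - g|_{[0,s)}⟫`. -/
def QST.sfgIntegral (S : QST E) (f g : H) (t : ℝ≥0∞) (φ : ℝ≥0∞ → ℂ) : ℂ :=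
  cintegral (S.cm (E.eV f) (E.eV g))
    (Set.indicator {s | s ≤ t}
      fun s => φ s * Complex.exp (-⟪f - E.cut s f, g - E.cut s g⟫))

/-- `ESt` is the family `(E_{S,t})_{t ∈ (0,∞]}` of time projections of `S`:
each `E_{S,t}` is an orthogonal projection and
`E_{S,t} ε(f) = ∫_{[0,t]} S(ds) ε(f|_{[0,s)}) ⊗ ε(0|_{[s,∞)})`. -/
def IsTimeProj (S : QST E) (ESt : ℝ≥0∞ → 𝓕 →L[ℂ] 𝓕) : Prop :=
  ∀ t : ℝ≥0∞, 0 < t →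
    IsSelfAdjoint (ESt t) ∧ ESt t ∘L ESt t = ESt t ∧
      ∀ f : H,
        Tendsto (fun π : StopPartition t => S.sum (fun s => E.past f s (E.eV 0)) π) atTop
          (𝓝 (ESt t (E.eV f)))

/-- `ΓS` is the stopped right shift of `S`:
`Γ_S x = ∫_{[0,∞]} S(ds) ε(0|_{[0,s)}) ⊗ Γ_s x`. -/
def IsStoppedShift (S : QST E) (ΓS : 𝓕 →L[ℂ] 𝓕) : Prop :=
  ∀ x : 𝓕, Tendsto (fun π : StopPartition ⊤ => S.sum (fun s => E.Gam s x) π) atTop (𝓝 (ΓS x))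

/-- `j` encodes the isometric isomorphism `j_S : 𝓕_{S)} ⊗ 𝓕_{[S} → 𝓕` of the
abstract strong Markov property, as a bilinear map on `𝓕 × 𝓕` (precomposed with
`E_S = E_{S,∞}` and `Γ_S` in the two arguments): it satisfies
`j_S(E_{S,t} ε(f) ⊗ Γ_S x) = ∫_{[0,t]} S(ds) ε(f|_{[0,s)}) ⊗ Γ_s x`, is isometric
for the tensor inner product, and has dense (hence, being isometric, full) range. -/
def IsJS (S : QST E) (ESt : ℝ≥0∞ → 𝓕 →L[ℂ] 𝓕) (ΓS : 𝓕 →L[ℂ] 𝓕)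
    (j : 𝓕 →ₗ[ℂ] 𝓕 →ₗ[ℂ] 𝓕) : Prop :=
  (∀ t : ℝ≥0∞, 0 < t → ∀ (f : H) (x : 𝓕),
      Tendsto (fun π : StopPartition t => S.sum (fun s => E.past f s (E.Gam s x)) π) atTop
        (𝓝 (j (ESt t (E.eV f)) (ΓS x)))) ∧
    (∀ a b x y : 𝓕,
      ⟪j (ESt ⊤ a) (ΓS x), j (ESt ⊤ b) (ΓS y)⟫ = ⟪ESt ⊤ a, ESt ⊤ b⟫ * ⟪ΓS x, ΓS y⟫) ∧
    Dense (Submodule.span ℂ {z : 𝓕 | ∃ a x : 𝓕, z = j (ESt ⊤ a) (ΓS x)} : Set 𝓕)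

/-- A spectral measure on the Borel sets of `[0, ∞]²`. -/
def IsSpectralProd (P : Set (ℝ≥0∞ × ℝ≥0∞) → 𝓕 →L[ℂ] 𝓕) : Prop :=
  (∀ A, IsSelfAdjoint (P A)) ∧ (∀ A, P A ∘L P A = P A) ∧ P Set.univ = 1 ∧
    ∀ A : ℕ → Set (ℝ≥0∞ × ℝ≥0∞), (∀ n, MeasurableSet (A n)) →
      Pairwise (Function.onFun Disjoint A) → ∀ x y : 𝓕,
        HasSum (fun n => ⟪x, P (A n) y⟫) ⟪x, P (⋃ n, A n) y⟫

/-- `P` is the product spectral measure `S ⊗ T` on `[0, ∞]²`, determined on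
rectangles by `(S ⊗ T)(A × B) = j_S (S(A) ⊗ Γ_S T(B) Γ_S^*) j_S^*`. -/
def IsProdOf (S T : QST E) (ESt : ℝ≥0∞ → 𝓕 →L[ℂ] 𝓕) (ΓS : 𝓕 →L[ℂ] 𝓕)
    (jS : 𝓕 →ₗ[ℂ] 𝓕 →ₗ[ℂ] 𝓕) (P : Set (ℝ≥0∞ × ℝ≥0∞) → 𝓕 →L[ℂ] 𝓕) : Prop :=
  IsSpectralProd P ∧
    ∀ A B : Set ℝ≥0∞, MeasurableSet A → MeasurableSet B → ∀ a y : 𝓕,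
      P (A ×ˢ B) (jS (ESt ⊤ a) (ΓS y)) = jS (S.meas A (ESt ⊤ a)) (ΓS (T.meas B y))

/-- `ST` is the convolution `S ⋆ T`:
`(S ⋆ T)(C) = (S ⊗ T)({(s, u) : s + u ∈ C})`. -/
def IsConvOf (S T : QST E) (ESt : ℝ≥0∞ → 𝓕 →L[ℂ] 𝓕) (ΓS : 𝓕 →L[ℂ] 𝓕)
    (jS : 𝓕 →ₗ[ℂ] 𝓕 →ₗ[ℂ] 𝓕) (ST : QST E) : Prop :=
  ∃ P : Set (ℝ≥0∞ × ℝ≥0∞) → 𝓕 →L[ℂ] 𝓕, IsProdOf S T ESt ΓS jS P ∧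
    ∀ C : Set ℝ≥0∞, MeasurableSet C → ST.meas C = P {p | p.1 + p.2 ∈ C}

/-- A Borel measurable, bounded, future-adapted integrand on `[0, t]`. -/
def MeasIntegrand [MeasurableSpace 𝓕] (E : FockSpec H 𝓕) (t : ℝ≥0∞)
    (F : ℝ≥0∞ → 𝓕) : Prop :=
  Measurable F ∧ BddOn t F ∧ E.FutureAdapted t F

/-- `Int` is a stop-time integral for `S`: `Int t f F` plays the role of
`∫_{[0,t]} S(ds) ε(f|_{[0,s)}) ⊗ F_s` for Borel measurable, bounded,
future-adapted `F`, satisfying the inner-product and projection identities and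
extending the Riemann-sum limit for continuous integrands. -/
def IsStopIntegral [MeasurableSpace 𝓕] (E : FockSpec H 𝓕) (S : QST E)
    (Int : ℝ≥0∞ → H → (ℝ≥0∞ → 𝓕) → 𝓕) : Prop :=
  (∀ (t : ℝ≥0∞) (f g : H) (F G : ℝ≥0∞ → 𝓕), MeasIntegrand E t F → MeasIntegrand E t G →
      ⟪Int t f F, Int t g G⟫ = S.sfgIntegral f g t fun s => ⟪F s, G s⟫) ∧
    (∀ (t : ℝ≥0∞) (f : H) (F : ℝ≥0∞ → 𝓕), MeasIntegrand E t F → ∀ r : ℝ≥0∞, 0 < r →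
      S.meas {s | s ≤ r} (Int t f F) = Int (min r t) f F) ∧
    (∀ (t : ℝ≥0∞) (f : H) (F : ℝ≥0∞ → 𝓕), MeasIntegrand E t F →
      ContinuousOn F {s | s ≤ t} →
        Tendsto (fun π : StopPartition t => S.sum (fun s => E.past f s (F s)) π) atTop
          (𝓝 (Int t f F)))

/-- `σ` is the CCR flow: `σ_t(X) = I_{t)} ⊗ Γ_t X Γ_t^*` for `t ∈ [0, ∞)`
(expressed through matrix elements between exponential vectors), and `σ_∞ ≡ I`. -/
def IsCCRFlow (E : FockSpec H 𝓕) (σ : ℝ≥0∞ → (𝓕 →L[ℂ] 𝓕) → 𝓕 →L[ℂ] 𝓕) : Prop :=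
  (∀ s : ℝ≥0∞, s ≠ ⊤ → ∀ (X : 𝓕 →L[ℂ] 𝓕) (f g : H),
      ⟪E.eV f, σ s X (E.eV g)⟫ =
        Complex.exp ⟪E.cut s f, E.cut s g⟫ *
          ⟪E.eV (E.shiftL s f), X (E.eV (E.shiftL s g))⟫) ∧
    ∀ X : 𝓕 →L[ℂ] 𝓕, σ ⊤ X = 1

/-- The Riemann sum `σ_{S,π}(X) = Σ_{j=1}^{n+1} σ_{π_j}(X) S((π_{j-1}, π_j])`. -/
def QST.flowSum (S : QST E) (σ : ℝ≥0∞ → (𝓕 →L[ℂ] 𝓕) → 𝓕 →L[ℂ] 𝓕)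
    (X : 𝓕 →L[ℂ] 𝓕) (π : StopPartition (⊤ : ℝ≥0∞)) : 𝓕 →L[ℂ] 𝓕 :=
  ∑ s ∈ π.pts.erase 0, σ s X ∘L S.meas (Set.Ioc (π.pred s) s)

/-- `σS` is the stopped CCR flow `σ_S`: for every `X`, `σ_S(X)` is the limit of
`σ_{S,π}(X)` in the strong operator topology as `π` is refined. -/
def IsStoppedFlow (S : QST E) (σ : ℝ≥0∞ → (𝓕 →L[ℂ] 𝓕) → 𝓕 →L[ℂ] 𝓕)
    (σS : (𝓕 →L[ℂ] 𝓕) → 𝓕 →L[ℂ] 𝓕) : Prop :=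
  ∀ (X : 𝓕 →L[ℂ] 𝓕) (x : 𝓕),
    Tendsto (fun π : StopPartition ⊤ => S.flowSum σ X π x) atTop (𝓝 (σS X x))

variable {h 𝓚 : Type*}
  [NormedAddCommGroup h] [InnerProductSpace ℂ h] [CompleteSpace h]
  [NormedAddCommGroup 𝓚] [InnerProductSpace ℂ 𝓚] [CompleteSpace 𝓚]

/-- An abstract presentation of the Hilbert-space tensor product `𝓚 = h ⊗ 𝓕` of
the initial space `h` and Fock space `𝓕`, with the ampliations
`X ↦ I_h ⊗ X` of `B(𝓕)` and `B ↦ B ⊗ I_𝓕` of `B(h)`. -/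
structure AmpSpec (𝓕 h 𝓚 : Type*) [NormedAddCommGroup 𝓕] [InnerProductSpace ℂ 𝓕]
    [CompleteSpace 𝓕] [NormedAddCommGroup h] [InnerProductSpace ℂ h] [CompleteSpace h]
    [NormedAddCommGroup 𝓚] [InnerProductSpace ℂ 𝓚] [CompleteSpace 𝓚] where
  tens : h →ₗ[ℂ] 𝓕 →ₗ[ℂ] 𝓚
  inner_tens : ∀ (u v : h) (x y : 𝓕), ⟪tens u x, tens v y⟫ = ⟪u, v⟫ * ⟪x, y⟫
  dense_tens : Dense (Submodule.span ℂ {z : 𝓚 | ∃ u x, z = tens u x} : Set 𝓚)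
  amp : (𝓕 →L[ℂ] 𝓕) → 𝓚 →L[ℂ] 𝓚
  amp_tens : ∀ (X : 𝓕 →L[ℂ] 𝓕) (u : h) (x : 𝓕), amp X (tens u x) = tens u (X x)
  ampH : (h →L[ℂ] h) → 𝓚 →L[ℂ] 𝓚
  ampH_tens : ∀ (B : h →L[ℂ] h) (u : h) (x : 𝓕), ampH B (tens u x) = tens (B u) x

/-- `X ∈ M ⊗̄ B(𝓕)` for the von Neumann algebra `M ⊆ B(h)`: `X` commutes with
`B ⊗ I_𝓕` for every `B` in the commutant of `M`. -/
def InVNTensor (A : AmpSpec 𝓕 h 𝓚) (M : Set (h →L[ℂ] h)) (X : 𝓚 →L[ℂ] 𝓚) : Prop :=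
  ∀ B : h →L[ℂ] h, (∀ Y ∈ M, B ∘L Y = Y ∘L B) → X ∘L A.ampH B = A.ampH B ∘L X

/-- `V` is a `p`-adapted process: `V_t = V_{t)} ⊗ P_{[t}`, where `P_{[t}` is the
second quantisation of the pointwise action `pH` of the projection `p` on
`L²([t,∞); k)`; expressed through matrix elements between exponential vectors. -/
def PAdapted (E : FockSpec H 𝓕) (A : AmpSpec 𝓕 h 𝓚) (pH : H →L[ℂ] H)
    (V : ℝ≥0∞ → 𝓚 →L[ℂ] 𝓚) : Prop :=
  ∀ t : ℝ≥0∞, t ≠ ⊤ → ∀ (u v : h) (f g : H),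
    ⟪A.tens u (E.eV f), V t (A.tens v (E.eV g))⟫ =
      ⟪A.tens u (E.eV (E.cut t f)), V t (A.tens v (E.eV (E.cut t g)))⟫ *
        Complex.exp ⟪f - E.cut t f, pH (g - E.cut t g)⟫

/-- `Vhat` is the identity-adapted projection `V̂` of the `p`-adapted process `V`:
`V̂_t = V_{t)} ⊗ I_{[t}`. -/
def IsHatOf (E : FockSpec H 𝓕) (A : AmpSpec 𝓕 h 𝓚)
    (V Vhat : ℝ≥0∞ → 𝓚 →L[ℂ] 𝓚) : Prop :=
  ∀ t : ℝ≥0∞, t ≠ ⊤ → ∀ (u v : h) (f g : H),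
    ⟪A.tens u (E.eV f), Vhat t (A.tens v (E.eV g))⟫ =
      ⟪A.tens u (E.eV (E.cut t f)), V t (A.tens v (E.eV (E.cut t g)))⟫ *
        Complex.exp ⟪f - E.cut t f, g - E.cut t g⟫

/-- The process is isometric: `V_{t)}^* V_{t)} = I`, i.e. `V̂_t` is isometric. -/
def IsometricHat (Vhat : ℝ≥0∞ → 𝓚 →L[ℂ] 𝓚) : Prop :=
  ∀ t : ℝ≥0∞, t ≠ ⊤ → ∀ z : 𝓚, ‖Vhat t z‖ = ‖z‖

/-- `Sig` is the CCR flow extended by ampliation to `B(h ⊗ 𝓕)`. -/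
def IsAmpCCRFlow (E : FockSpec H 𝓕) (A : AmpSpec 𝓕 h 𝓚)
    (Sig : ℝ≥0∞ → (𝓚 →L[ℂ] 𝓚) → 𝓚 →L[ℂ] 𝓚) : Prop :=
  ∀ s : ℝ≥0∞, s ≠ ⊤ → ∀ (X : 𝓚 →L[ℂ] 𝓚) (u v : h) (f g : H),
    ⟪A.tens u (E.eV f), Sig s X (A.tens v (E.eV g))⟫ =
      Complex.exp ⟪E.cut s f, E.cut s g⟫ *
        ⟪A.tens u (E.eV (E.shiftL s f)), X (A.tens v (E.eV (E.shiftL s g)))⟫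

/-- The (left operator Markovian) cocycle identity `V_{s+t} = V̂_s σ_s(V_t)`. -/
def IsLeftCocycle (Sig : ℝ≥0∞ → (𝓚 →L[ℂ] 𝓚) → 𝓚 →L[ℂ] 𝓚)
    (V Vhat : ℝ≥0∞ → 𝓚 →L[ℂ] 𝓚) : Prop :=
  ∀ s t : ℝ≥0∞, s ≠ ⊤ → t ≠ ⊤ → V (s + t) = Vhat s ∘L Sig s (V t)

/-- Strong continuity of the process on `[0, ∞)`. -/
def StrongContOn (V : ℝ≥0∞ → 𝓚 →L[ℂ] 𝓚) : Prop :=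
  ∀ z : 𝓚, ContinuousOn (fun t => V t z) {t : ℝ≥0∞ | t ≠ ⊤}

/-- The Riemann sum `V_{S,π} = Σ_{j=1}^{n+1} V_{π_j} S((π_{j-1}, π_j])`, with the
stop time `S` extended by ampliation to `h ⊗ 𝓕`. -/
def VSum {E : FockSpec H 𝓕} (A : AmpSpec 𝓕 h 𝓚) (S : QST E) {t : ℝ≥0∞}
    (V : ℝ≥0∞ → 𝓚 →L[ℂ] 𝓚) (π : StopPartition t) : 𝓚 →L[ℂ] 𝓚 :=
  ∑ s ∈ π.pts.erase 0, V s ∘L A.amp (S.meas (Set.Ioc (π.pred s) s))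


/- ------------------------------------------------------------------
Auxiliary material for Statement 8.
------------------------------------------------------------------ -/

section Aux8

instance StopPartition.instNonempty {t : ℝ≥0∞} : Nonempty (StopPartition t) :=
  ⟨⟨{0, t}, by simp, by simp, fun s hs => by
      rcases Finset.mem_insert.mp hs with rfl | h
      · exact zero_le (a := t)
      · rw [Finset.mem_singleton.mp h]⟩⟩

instance StopPartition.instIsDirected {t : ℝ≥0∞} : IsDirected (StopPartition t) (· ≤ ·) :=
  ⟨fun π π' =>
    ⟨⟨π.pts ∪ π'.pts, Finset.mem_union_left _ π.zero_mem, Finset.mem_union_left _ π.top_mem,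
        fun s hs => (Finset.mem_union.mp hs).elim (π.mem_le s) (π'.mem_le s)⟩,
      Finset.subset_union_left, Finset.subset_union_right⟩⟩

instance StopPartition.instNeBot {t : ℝ≥0∞} : (atTop : Filter (StopPartition t)).NeBot :=
  atTop_neBot

variable {H 𝓕 : Type*}
  [NormedAddCommGroup H] [InnerProductSpace ℂ H] [CompleteSpace H]
  [NormedAddCommGroup 𝓕] [InnerProductSpace ℂ 𝓕] [CompleteSpace 𝓕]
  {E : FockSpec H 𝓕}

private lemma op_ext {A B : 𝓕 →L[ℂ] 𝓕} (h : ∀ x y : 𝓕, ⟪x, A y⟫ = ⟪x, B y⟫) : A = B :=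
  ContinuousLinearMap.ext fun y => ext_inner_left ℂ fun x => h x y

/-- Extend equality of operators from a generating set with dense span. -/
private lemma op_ext_dense {A B : 𝓕 →L[ℂ] 𝓕} {s : Set 𝓕}
    (hs : Dense (Submodule.span ℂ s : Set 𝓕)) (h : ∀ z ∈ s, A z = B z) : A = B := by
  have heq : ∀ z ∈ Submodule.span ℂ s, A z = B z := by
    intro z hz
    induction hz using Submodule.span_induction with
    | mem z hz => exact h z hz
    | zero => simp
    | add _ _ _ _ h1 h2 => simp [map_add, h1, h2]
    | smul c _ _ h1 => simp [_root_.map_smul, h1]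
  exact ContinuousLinearMap.coeFn_injective <|
    Continuous.ext_on hs A.continuous B.continuous heq

/-- Finite additivity of a quantum stop time, as operators. -/
private lemma QST.meas_add (S : QST E) {A B : Set ℝ≥0∞}
    (hA : MeasurableSet A) (hB : MeasurableSet B) (hd : Disjoint A B) :
    S.meas (A ∪ B) = S.meas A + S.meas B := by
  apply op_ext; intro x y
  rw [ContinuousLinearMap.add_apply, inner_add_right, ← S.cm_apply x y A hA,
    ← S.cm_apply x y B hB, ← S.cm_apply x y _ (hA.union hB),
    (S.cm x y).of_union hd hA hB]

private lemma QST.meas_empty (S : QST E) : S.meas ∅ = 0 := by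
  have h := S.meas_add (A := ∅) (B := ∅) .empty .empty (by simp)
  rw [Set.union_empty] at h
  exact left_eq_add.mp h

/-- Disjoint measurable sets have orthogonal projections (abstract form). -/
private lemma proj_disj_mul {α : Type*} [MeasurableSpace α] {meas : Set α → 𝓕 →L[ℂ] 𝓕}
    (idem : ∀ A, meas A ∘L meas A = meas A)
    (add : ∀ A B : Set α, MeasurableSet A → MeasurableSet B → Disjoint A B →
      meas (A ∪ B) = meas A + meas B)
    {A B : Set α} (hA : MeasurableSet A) (hB : MeasurableSet B) (hd : Disjoint A B) :
    meas A * meas B = 0 := by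
  have hp : meas A * meas A = meas A := idem A
  have hq : meas B * meas B = meas B := idem B
  have hpq : (meas A + meas B) * (meas A + meas B) = meas A + meas B := by
    rw [← add A B hA hB hd]; exact idem _
  set p := meas A
  set q := meas B
  have expand : p * p + q * p + (p * q + q * q) = p + q := by
    rw [← add_mul, ← add_mul, ← mul_add]; exact hpq
  rw [hp, hq] at expand
  have h2 : q * p + p * q = 0 := by
    have hrw : q * p + p * q = p + q * p + (p * q + q) - (p + q) := by abel
    rw [hrw, expand, sub_self]
  have h3 : p * (q * p) + p * (p * q) = 0 := by rw [← mul_add, h2, mul_zero]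
  have h4 : q * p * p + p * q * p = 0 := by rw [← add_mul, h2, zero_mul]
  rw [← mul_assoc, ← mul_assoc, hp] at h3
  rw [mul_assoc q p p, hp] at h4
  -- h3 : p*q*p + p*q = 0,  h4 : q*p + p*q*p = 0
  have e1 : p * q * p = -(p * q) := eq_neg_of_add_eq_zero_left h3
  have e2 : q * p = -(p * q * p) := eq_neg_of_add_eq_zero_left h4
  have h5 : q * p = p * q := by rw [e2, e1, neg_neg]
  have h6 : (2 : ℂ) • (p * q) = 0 := by
    rw [h5] at h2
    rw [two_smul]
    exact h2
  rcases smul_eq_zero.mp h6 with h | h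
  · exact absurd h (by norm_num)
  · exact h

/-- Multiplicativity of a weakly countably additive projection-valued measure. -/
private lemma proj_mul {α : Type*} [MeasurableSpace α] {meas : Set α → 𝓕 →L[ℂ] 𝓕}
    (idem : ∀ A, meas A ∘L meas A = meas A)
    (add : ∀ A B : Set α, MeasurableSet A → MeasurableSet B → Disjoint A B →
      meas (A ∪ B) = meas A + meas B)
    {A B : Set α} (hA : MeasurableSet A) (hB : MeasurableSet B) :
    meas A ∘L meas B = meas (A ∩ B) := by
  have hABs : A = (A ∩ B) ∪ (A \ B) := (Set.inter_union_diff A B).symm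
  have hBAs : B = (A ∩ B) ∪ (B \ A) := by
    rw [Set.inter_comm]; exact (Set.inter_union_diff B A).symm
  have d1 : Disjoint (A ∩ B) (A \ B) := by
    rw [Set.disjoint_left]; rintro x ⟨-, hxB⟩ ⟨-, hxB'⟩; exact hxB' hxB
  have d2 : Disjoint (A ∩ B) (B \ A) := by
    rw [Set.disjoint_left]; rintro x ⟨hxA, -⟩ ⟨-, hxA'⟩; exact hxA' hxA
  have d3 : Disjoint (A \ B) (A ∩ B) := d1.symm
  have d4 : Disjoint (A \ B) (B \ A) := by
    rw [Set.disjoint_left]; rintro x ⟨-, hxB⟩ ⟨hxB', -⟩; exact hxB hxB'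
  have hmA : meas A = meas (A ∩ B) + meas (A \ B) := by
    conv_lhs => rw [hABs]
    exact add _ _ (hA.inter hB) (hA.diff hB) d1
  have hmB : meas B = meas (A ∩ B) + meas (B \ A) := by
    conv_lhs => rw [hBAs]
    exact add _ _ (hA.inter hB) (hB.diff hA) d2
  have idem' : ∀ C, meas C * meas C = meas C := idem
  show meas A * meas B = meas (A ∩ B)
  rw [hmA, hmB, add_mul, mul_add, mul_add, idem' (A ∩ B),
    proj_disj_mul idem add (hA.inter hB) (hB.diff hA) d2,
    proj_disj_mul idem add (hA.diff hB) (hA.inter hB) d3,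
    proj_disj_mul idem add (hA.diff hB) (hB.diff hA) d4]
  simp

private lemma spectral_empty {P : Set (ℝ≥0∞ × ℝ≥0∞) → 𝓕 →L[ℂ] 𝓕}
    (h : IsSpectralProd P) : P ∅ = 0 := by
  apply op_ext; intro x y
  have h0 := h.2.2.2 (fun _ => (∅ : Set (ℝ≥0∞ × ℝ≥0∞))) (fun _ => .empty)
    (fun i j _ => by simp [Function.onFun]) x y
  rw [Set.iUnion_empty] at h0
  have hz : Tendsto (fun _ : ℕ => ⟪x, P ∅ y⟫) atTop (𝓝 0) := h0.summable.tendsto_atTop_zero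
  have hc := tendsto_nhds_unique hz tendsto_const_nhds
  simp [← hc]

private lemma spectral_add {P : Set (ℝ≥0∞ × ℝ≥0∞) → 𝓕 →L[ℂ] 𝓕}
    (h : IsSpectralProd P) {A B : Set (ℝ≥0∞ × ℝ≥0∞)}
    (hA : MeasurableSet A) (hB : MeasurableSet B) (hd : Disjoint A B) :
    P (A ∪ B) = P A + P B := by
  apply op_ext; intro x y
  set A' : ℕ → Set (ℝ≥0∞ × ℝ≥0∞) := fun n => if n = 0 then A else if n = 1 then B else ∅
    with hA'
  have hmeas : ∀ n, MeasurableSet (A' n) := by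
    intro n; simp only [hA']
    split_ifs <;> first | exact hA | exact hB | exact .empty
  have e0 : A' 0 = A := by simp [hA']
  have e1 : A' 1 = B := by simp [hA']
  have e2 : ∀ n, A' (n + 2) = ∅ := fun n => by simp [hA']
  have hdisj : Pairwise (Function.onFun Disjoint A') := by
    intro i j hij
    unfold Function.onFun
    rcases i with _ | _ | i <;> rcases j with _ | _ | j <;>
      simp only [e0, e1, e2] <;>
      first
        | exact absurd rfl hij
        | exact hd
        | exact hd.symm
        | exact Set.disjoint_empty _
        | exact Set.empty_disjoint _
  have hsum := h.2.2.2 A' hmeas hdisj x y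
  have hU : (⋃ n, A' n) = A ∪ B := by
    apply Set.Subset.antisymm
    · refine Set.iUnion_subset fun n => ?_
      rcases n with _ | _ | n <;> simp [hA', Set.subset_union_left, Set.subset_union_right]
    · rintro z (hz | hz)
      · exact Set.mem_iUnion.mpr ⟨0, by simp [hA', hz]⟩
      · exact Set.mem_iUnion.mpr ⟨1, by simp [hA', hz]⟩
  rw [hU] at hsum
  have hfun : (fun n => ⟪x, P (A' n) y⟫) =
      fun n => (if n = 0 then ⟪x, P A y⟫ else 0) + (if n = 1 then ⟪x, P B y⟫ else 0) := by
    funext n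
    rcases n with _ | _ | n <;> simp [hA', spectral_empty h]
  rw [hfun] at hsum
  have h2 : HasSum
      (fun n => (if n = 0 then ⟪x, P A y⟫ else 0) + (if n = 1 then ⟪x, P B y⟫ else 0))
      (⟪x, P A y⟫ + ⟪x, P B y⟫) := (hasSum_ite_eq 0 _).add (hasSum_ite_eq 1 _)
  rw [hsum.unique h2, ContinuousLinearMap.add_apply, inner_add_right]

/-- Applying `S([0, r])` to a Riemann-sum limit over partitions of `[0, ∞]`
restricts the limit to `[0, r]`. -/
private lemma stop_meas_limit (S : QST E)
    (hmul : ∀ {A B : Set ℝ≥0∞}, MeasurableSet A → MeasurableSet B →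
      S.meas A ∘L S.meas B = S.meas (A ∩ B))
    {r : ℝ≥0∞} (hr : 0 < r) (v : ℝ≥0∞ → 𝓕) {L L' : 𝓕}
    (h1 : Tendsto (fun π : StopPartition ⊤ => S.sum v π) atTop (𝓝 L))
    (h2 : Tendsto (fun π : StopPartition r => S.sum v π) atTop (𝓝 L')) :
    S.meas {s | s ≤ r} L = L' := by
  classical
  have hc : Tendsto (fun π : StopPartition ⊤ => S.meas {s | s ≤ r} (S.sum v π)) atTop
      (𝓝 (S.meas {s | s ≤ r} L)) := ((S.meas {s | s ≤ r}).continuous.tendsto L).comp h1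
  refine tendsto_nhds_unique hc ?_
  rw [Filter.tendsto_def]
  intro U hU
  have hmem : (fun ρ : StopPartition r => S.sum v ρ) ⁻¹' U ∈ (atTop : Filter (StopPartition r)) :=
    h2 hU
  obtain ⟨ρ₀, -, hρ₀⟩ := atTop_basis.mem_iff.mp hmem
  set π₀ : StopPartition ⊤ := ⟨insert ⊤ ρ₀.pts, Finset.mem_insert_of_mem ρ₀.zero_mem,
    Finset.mem_insert_self _ _, fun s _ => le_top⟩ with hπ₀
  refine mem_of_superset (mem_atTop π₀) ?_
  intro π hπ
  have hπ' : π₀.pts ⊆ π.pts := hπ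
  have hrmem : r ∈ π.pts := hπ' (Finset.mem_insert_of_mem ρ₀.top_mem)
  set ρ : StopPartition r := ⟨π.pts.filter (· ≤ r),
    Finset.mem_filter.mpr ⟨π.zero_mem, zero_le (a := r)⟩,
    Finset.mem_filter.mpr ⟨hrmem, le_rfl⟩,
    fun s hs => (Finset.mem_filter.mp hs).2⟩ with hρdef
  have hρ : ρ₀ ≤ ρ := fun u hu =>
    Finset.mem_filter.mpr ⟨hπ' (Finset.mem_insert_of_mem hu), ρ₀.mem_le u hu⟩
  have hkey : S.meas {s | s ≤ r} (S.sum v π) = S.sum v ρ := by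
    show S.meas {s | s ≤ r} (∑ s ∈ π.pts.erase 0, S.meas (Set.Ioc (π.pred s) s) (v s)) = _
    rw [map_sum]
    have hterm : ∀ s ∈ π.pts.erase 0,
        S.meas {s' | s' ≤ r} (S.meas (Set.Ioc (π.pred s) s) (v s)) =
          if s ≤ r then S.meas (Set.Ioc (π.pred s) s) (v s) else 0 := by
      intro s _
      have hco : S.meas {s' | s' ≤ r} (S.meas (Set.Ioc (π.pred s) s) (v s)) =
          S.meas ({s' | s' ≤ r} ∩ Set.Ioc (π.pred s) s) (v s) := by
        rw [← ContinuousLinearMap.comp_apply,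
          hmul (A := {s' | s' ≤ r}) (B := Set.Ioc (π.pred s) s)
            (by exact measurableSet_Iic) measurableSet_Ioc]
      by_cases hsr : s ≤ r
      · have hIeq : {s' | s' ≤ r} ∩ Set.Ioc (π.pred s) s = Set.Ioc (π.pred s) s :=
          Set.inter_eq_right.mpr fun x hx => le_trans hx.2 hsr
        rw [hco, hIeq]
        simp [hsr]
      · push_neg at hsr
        have hpred : r ≤ π.pred s :=
          Finset.le_sup (f := id) (Finset.mem_filter.mpr ⟨hrmem, hsr⟩)
        have hint : {s' | s' ≤ r} ∩ Set.Ioc (π.pred s) s = ∅ := by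
          apply Set.eq_empty_iff_forall_notMem.mpr
          rintro x ⟨hxr, hx1, -⟩
          exact absurd (lt_of_le_of_lt hxr (lt_of_le_of_lt hpred hx1)) (lt_irrefl x)
        rw [hco, hint, S.meas_empty]
        simp [not_le.mpr hsr]
    rw [Finset.sum_congr rfl hterm, ← Finset.sum_filter]
    have hset : (π.pts.erase 0).filter (· ≤ r) = ρ.pts.erase 0 := by
      ext u
      simp only [Finset.mem_filter, Finset.mem_erase, hρdef]
      tauto
    have hpredeq : ∀ u ∈ ρ.pts.erase 0, π.pred u = ρ.pred u := by
      intro u hu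
      have hur : u ≤ r := (Finset.mem_filter.mp (Finset.mem_of_mem_erase hu)).2
      show (π.pts.filter fun x => x < u).sup id = (ρ.pts.filter fun x => x < u).sup id
      congr 1
      rw [hρdef]
      show π.pts.filter (fun x => x < u) = (π.pts.filter (· ≤ r)).filter fun x => x < u
      rw [Finset.filter_filter]
      exact Finset.filter_congr fun x _ =>
        ⟨fun hx => ⟨le_trans hx.le hur, hx⟩, fun hx => hx.2⟩
    rw [hset]
    exact Finset.sum_congr rfl fun u hu => by rw [hpredeq u hu]
  show π ∈ (fun π : StopPartition ⊤ => S.meas {s | s ≤ r} (S.sum v π)) ⁻¹' U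
  simp only [Set.mem_preimage]
  rw [hkey]
  exact hρ₀ hρ

end Aux8

/-- convolution with a deterministic stop time `T({t₀}) = I`,
`t₀ ∈ (0, ∞)`, is the translate `S + t₀`:
`(S ⋆ T)([0,u]) = 0` for `u < t₀` and `(S ⋆ T)([0,u]) = S([0, u - t₀])` for
`u ≥ t₀`. -/
theorem convolution_with_deterministic
    (E : FockSpec H 𝓕) (S T : QST E) (hS : S.Finite) (hT : T.Finite)
    (t₀ : ℝ≥0∞) (ht₀ : 0 < t₀) (ht₀' : t₀ ≠ ⊤) (hdet : T.meas {t₀} = 1)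
    (ESt : ℝ≥0∞ → 𝓕 →L[ℂ] 𝓕) (hESt : IsTimeProj S ESt)
    (ΓS : 𝓕 →L[ℂ] 𝓕) (hΓiso : ∀ x : 𝓕, ‖ΓS x‖ = ‖x‖) (hΓS : IsStoppedShift S ΓS)
    (jS : 𝓕 →ₗ[ℂ] 𝓕 →ₗ[ℂ] 𝓕) (hjS : IsJS S ESt ΓS jS)
    (P : Set (ℝ≥0∞ × ℝ≥0∞) → 𝓕 →L[ℂ] 𝓕) (hP : IsProdOf S T ESt ΓS jS P) :
    (∀ u : ℝ≥0∞, u < t₀ → P {p | p.1 + p.2 ≤ u} = 0) ∧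
      ∀ u : ℝ≥0∞, t₀ ≤ u → P {p | p.1 + p.2 ≤ u} = S.meas {s | s ≤ u - t₀} := by
  classical
  obtain ⟨hjlim, hjiso, hjdense⟩ := hjS
  obtain ⟨hPspec, hPrect⟩ := hP
  obtain ⟨hPsa, hPidem, hPuniv, hPhs⟩ := hPspec
  have hPspec' : IsSpectralProd P := ⟨hPsa, hPidem, hPuniv, hPhs⟩
  have hPadd : ∀ A B : Set (ℝ≥0∞ × ℝ≥0∞), MeasurableSet A → MeasurableSet B →
      Disjoint A B → P (A ∪ B) = P A + P B :=
    fun _ _ hA hB hd => spectral_add hPspec' hA hB hd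
  have hPempty : P ∅ = 0 := spectral_empty hPspec'
  have hPmul : ∀ {A B : Set (ℝ≥0∞ × ℝ≥0∞)}, MeasurableSet A → MeasurableSet B →
      P A ∘L P B = P (A ∩ B) := fun hA hB => proj_mul hPidem hPadd hA hB
  have hSadd : ∀ A B : Set ℝ≥0∞, MeasurableSet A → MeasurableSet B → Disjoint A B →
      S.meas (A ∪ B) = S.meas A + S.meas B := fun _ _ hA hB hd => S.meas_add hA hB hd
  have hSmul : ∀ {A B : Set ℝ≥0∞}, MeasurableSet A → MeasurableSet B →
      S.meas A ∘L S.meas B = S.meas (A ∩ B) := fun hA hB => proj_mul S.idem hSadd hA hB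
  have hR : MeasurableSet ((Set.univ : Set ℝ≥0∞) ×ˢ ({t₀} : Set ℝ≥0∞)) :=
    MeasurableSet.univ.prod (measurableSet_singleton t₀)
  -- norms of the generating vectors
  have hnorm : ∀ a x : 𝓕, ‖jS (ESt ⊤ a) (ΓS x)‖ = ‖ESt ⊤ a‖ * ‖x‖ := by
    intro a x
    have h1 := hjiso a a x x
    rw [inner_self_eq_norm_sq_to_K, inner_self_eq_norm_sq_to_K,
      inner_self_eq_norm_sq_to_K] at h1
    have h2 : ‖jS (ESt ⊤ a) (ΓS x)‖ ^ 2 = (‖ESt ⊤ a‖ * ‖ΓS x‖) ^ 2 := by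
      rw [mul_pow]; exact_mod_cast h1
    have h3 := congrArg Real.sqrt h2
    rwa [Real.sqrt_sq (norm_nonneg _), Real.sqrt_sq (by positivity), hΓiso x] at h3
  -- the span of the 'exponential' generating vectors is dense
  have hG'dense : Dense (Submodule.span ℂ
      {z : 𝓕 | ∃ (f : H) (x : 𝓕), z = jS (ESt ⊤ (E.eV f)) (ΓS x)} : Set 𝓕) := by
    set G' : Set 𝓕 := {z | ∃ (f : H) (x : 𝓕), z = jS (ESt ⊤ (E.eV f)) (ΓS x)} with hG'
    have key : ∀ x a : 𝓕, jS (ESt ⊤ a) (ΓS x) ∈ (Submodule.span ℂ G').topologicalClosure := by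
      intro x a
      let L : 𝓕 →ₗ[ℂ] 𝓕 :=
        { toFun := fun b => jS (ESt ⊤ b) (ΓS x)
          map_add' := fun b c => by simp [map_add]
          map_smul' := fun c b => by simp [_root_.map_smul] }
      have hLb : ∀ b, ‖L b‖ ≤ (‖ESt ⊤‖ * ‖x‖) * ‖b‖ := by
        intro b
        calc ‖L b‖ = ‖ESt ⊤ b‖ * ‖x‖ := hnorm b x
        _ ≤ (‖ESt ⊤‖ * ‖b‖) * ‖x‖ :=
          mul_le_mul_of_nonneg_right ((ESt ⊤).le_opNorm b) (norm_nonneg x)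
        _ = (‖ESt ⊤‖ * ‖x‖) * ‖b‖ := by ring
      let Ψ : 𝓕 →L[ℂ] 𝓕 := L.mkContinuous (‖ESt ⊤‖ * ‖x‖) hLb
      have hsub : Submodule.span ℂ (Set.range E.eV) ≤
          ((Submodule.span ℂ G').topologicalClosure).comap L :=
        Submodule.span_le.mpr (by
          rintro _ ⟨f, rfl⟩
          exact Submodule.le_topologicalClosure _ (Submodule.subset_span ⟨f, x, rfl⟩))
      have hcl : IsClosed (Ψ ⁻¹' ((Submodule.span ℂ G').topologicalClosure : Set 𝓕)) :=
        (Submodule.isClosed_topologicalClosure _).preimage Ψ.continuous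
      have hsub' : (Submodule.span ℂ (Set.range E.eV) : Set 𝓕) ⊆
          Ψ ⁻¹' ((Submodule.span ℂ G').topologicalClosure : Set 𝓕) := by
        intro b hb
        exact hsub hb
      exact (hcl.closure_subset_iff.mpr hsub') (E.dense_eV a)
    have hspan : Submodule.span ℂ {w : 𝓕 | ∃ a x : 𝓕, w = jS (ESt ⊤ a) (ΓS x)} ≤
        (Submodule.span ℂ G').topologicalClosure :=
      Submodule.span_le.mpr (by rintro _ ⟨a, x, rfl⟩; exact key x a)
    intro z
    have h2 : closure (Submodule.span ℂ
        {w : 𝓕 | ∃ a x : 𝓕, w = jS (ESt ⊤ a) (ΓS x)} : Set 𝓕) ⊆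
        ((Submodule.span ℂ G').topologicalClosure : Set 𝓕) :=
      (Submodule.isClosed_topologicalClosure _).closure_subset_iff.mpr hspan
    rw [Submodule.topologicalClosure_coe] at h2
    exact h2 (hjdense z)
  -- `P (univ × {t₀}) = 1`
  have hPR1 : P ((Set.univ : Set ℝ≥0∞) ×ˢ ({t₀} : Set ℝ≥0∞)) = 1 := by
    apply op_ext_dense hjdense
    rintro z ⟨a, x, rfl⟩
    rw [hPrect Set.univ {t₀} MeasurableSet.univ (measurableSet_singleton t₀) a x,
      S.total, hdet]
    simp
  have hPRc : P (((Set.univ : Set ℝ≥0∞) ×ˢ ({t₀} : Set ℝ≥0∞))ᶜ) = 0 := by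
    have h1 := hPadd _ _ hR hR.compl disjoint_compl_right
    rw [Set.union_compl_self, hPuniv, hPR1] at h1
    exact left_eq_add.mp h1
  -- `P C = P (C ∩ (univ × {t₀}))`
  have hPnull : ∀ C : Set (ℝ≥0∞ × ℝ≥0∞), MeasurableSet C →
      P C = P (C ∩ (Set.univ : Set ℝ≥0∞) ×ˢ ({t₀} : Set ℝ≥0∞)) := by
    intro C hC
    have hzero : P (C \ (Set.univ : Set ℝ≥0∞) ×ˢ ({t₀} : Set ℝ≥0∞)) = 0 := by
      have hm := hPmul (hC.diff hR) hR.compl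
      rw [hPRc, ContinuousLinearMap.comp_zero] at hm
      have hint : (C \ (Set.univ : Set ℝ≥0∞) ×ˢ ({t₀} : Set ℝ≥0∞)) ∩ ((Set.univ : Set ℝ≥0∞) ×ˢ ({t₀} : Set ℝ≥0∞))ᶜ =
          C \ (Set.univ : Set ℝ≥0∞) ×ˢ ({t₀} : Set ℝ≥0∞) :=
        Set.inter_eq_left.mpr fun x hx => hx.2
      rw [hint] at hm
      exact hm.symm
    have hdisj : Disjoint (C ∩ (Set.univ : Set ℝ≥0∞) ×ˢ ({t₀} : Set ℝ≥0∞))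
        (C \ (Set.univ : Set ℝ≥0∞) ×ˢ ({t₀} : Set ℝ≥0∞)) := by
      rw [Set.disjoint_left]; rintro x ⟨-, hx⟩ ⟨-, hx'⟩; exact hx' hx
    calc P C = P ((C ∩ (Set.univ : Set ℝ≥0∞) ×ˢ ({t₀} : Set ℝ≥0∞)) ∪
        (C \ (Set.univ : Set ℝ≥0∞) ×ˢ ({t₀} : Set ℝ≥0∞))) := by rw [Set.inter_union_diff]
    _ = P (C ∩ (Set.univ : Set ℝ≥0∞) ×ˢ ({t₀} : Set ℝ≥0∞)) + P (C \ (Set.univ : Set ℝ≥0∞) ×ˢ ({t₀} : Set ℝ≥0∞)) :=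
      hPadd _ _ (hC.inter hR) (hC.diff hR) hdisj
    _ = P (C ∩ (Set.univ : Set ℝ≥0∞) ×ˢ ({t₀} : Set ℝ≥0∞)) := by rw [hzero, add_zero]
  refine ⟨?_, ?_⟩
  · -- `u < t₀`
    intro u hu
    have hCm : MeasurableSet {p : ℝ≥0∞ × ℝ≥0∞ | p.1 + p.2 ≤ u} :=
      measurableSet_le (measurable_fst.add measurable_snd) measurable_const
    have hint : {p : ℝ≥0∞ × ℝ≥0∞ | p.1 + p.2 ≤ u} ∩ (Set.univ : Set ℝ≥0∞) ×ˢ ({t₀} : Set ℝ≥0∞) = ∅ := by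
      apply Set.eq_empty_iff_forall_notMem.mpr
      rintro ⟨s, t⟩ ⟨h1, -, h2⟩
      have h2' : t = t₀ := h2
      have h1' : s + t ≤ u := h1
      rw [h2'] at h1'
      exact absurd (lt_of_le_of_lt (le_trans le_add_self h1') hu) (lt_irrefl t₀)
    rw [hPnull {p : ℝ≥0∞ × ℝ≥0∞ | p.1 + p.2 ≤ u} hCm, hint, hPempty]
  · -- `t₀ ≤ u`
    intro u hu
    by_cases hutop : u = ⊤
    · subst hutop
      have h1 : {p : ℝ≥0∞ × ℝ≥0∞ | p.1 + p.2 ≤ ⊤} = Set.univ := by ext p; simp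
      have h2 : {s : ℝ≥0∞ | s ≤ ⊤ - t₀} = Set.univ := by
        ext s; simp [ENNReal.top_sub ht₀']
      rw [h1, h2, hPuniv, S.total]
    · have hCm : MeasurableSet {p : ℝ≥0∞ × ℝ≥0∞ | p.1 + p.2 ≤ u} :=
        measurableSet_le (measurable_fst.add measurable_snd) measurable_const
      have hint : {p : ℝ≥0∞ × ℝ≥0∞ | p.1 + p.2 ≤ u} ∩ (Set.univ : Set ℝ≥0∞) ×ˢ ({t₀} : Set ℝ≥0∞) =
          {s : ℝ≥0∞ | s ≤ u - t₀} ×ˢ ({t₀} : Set ℝ≥0∞) := by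
        ext ⟨s, t⟩
        constructor
        · rintro ⟨h1, -, h2⟩
          have h2' : t = t₀ := h2
          have h1' : s + t ≤ u := h1
          rw [h2'] at h1'
          refine ⟨?_, h2⟩
          have h3 := tsub_le_tsub_right h1' t₀
          show s ≤ u - t₀
          rwa [ENNReal.add_sub_cancel_right ht₀'] at h3
        · rintro ⟨h1, h2⟩
          have h2' : t = t₀ := h2
          have h1' : s ≤ u - t₀ := h1
          refine ⟨?_, Set.mem_univ _, h2⟩
          show s + t ≤ u
          rw [h2']
          calc s + t₀ ≤ (u - t₀) + t₀ := add_le_add h1' le_rfl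
          _ = u := tsub_add_cancel_of_le hu
      rw [hPnull {p : ℝ≥0∞ × ℝ≥0∞ | p.1 + p.2 ≤ u} hCm, hint]
      by_cases hr0 : u - t₀ = 0
      · have hs0 : {s : ℝ≥0∞ | s ≤ u - t₀} = {0} := by
          ext s; simp [hr0, nonpos_iff_eq_zero]
        rw [hs0, S.zero]
        apply op_ext_dense hjdense
        rintro z ⟨a, x, rfl⟩
        rw [hPrect {0} {t₀} (measurableSet_singleton 0) (measurableSet_singleton t₀) a x,
          S.zero]
        simp
      · have hrpos : 0 < u - t₀ := pos_iff_ne_zero.mpr hr0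
        have ha : ∀ f : H, S.meas {s | s ≤ u - t₀} (ESt ⊤ (E.eV f)) =
            ESt (u - t₀) (E.eV f) := fun f =>
          stop_meas_limit S hSmul hrpos _
            ((hESt ⊤ ENNReal.zero_lt_top).2.2 f) ((hESt (u - t₀) hrpos).2.2 f)
        have hb : ∀ (f : H) (x : 𝓕),
            S.meas {s | s ≤ u - t₀} (jS (ESt ⊤ (E.eV f)) (ΓS x)) =
              jS (ESt (u - t₀) (E.eV f)) (ΓS x) := fun f x =>
          stop_meas_limit S hSmul hrpos _
            (hjlim ⊤ ENNReal.zero_lt_top f x) (hjlim (u - t₀) hrpos f x)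
        apply op_ext_dense hG'dense
        rintro z ⟨f, x, rfl⟩
        rw [hPrect {s | s ≤ u - t₀} {t₀} (by exact measurableSet_Iic)
          (measurableSet_singleton t₀) (E.eV f) x, hdet,
          ContinuousLinearMap.one_apply, ha f]
        exact (hb f x).symm

end
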